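/- For any family S of linear subspaces of X, the algebra E_S(X) is invariant under translations: if f ∈ E_S(X) and a ∈ X, then the translate x ↦ f(x + a) also belongs to E_S(X). -/

import Mathlib

open MeasureTheory Metric Filter Topology

noncomputable section

/-- `X d` is the Euclidean space `ℝ^d` with its standard inner product and norm. -/
abbrev X (d : ℕ) : Type := EuclideanSpace ℝ (Fin d)

/-- `h` is a boundary function for `f` : `f` has uniform radial limits at infinity given
(on the unit sphere) by the continuous function `h`. -/
def IsBoundary {E : Type*} [NormedAddCommGroup E] [InnerProductSpace ℝ E]
    (f : E → ℂ) (h : E → ℂ) : Prop :=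
  Continuous h ∧
    ∀ ε > 0, ∃ r > 0, ∀ z : E, r ≤ ‖z‖ → ‖f z - h (‖z‖⁻¹ • z)‖ < ε

/-- `f` has uniform radial limits at infinity. -/
def HasUniformRadialLimits {E : Type*} [NormedAddCommGroup E] [InnerProductSpace ℝ E]
    (f : E → ℂ) : Prop :=
  ∃ h : E → ℂ, IsBoundary f h

/-- The generating set of the algebra `E_S(X)` : functions of the form `g ∘ π_Y` with `Y ∈ S`
and `g` a bounded continuous function on `Y^⊥` having uniform radial limits at infinity. -/
def projGen {E : Type*} [NormedAddCommGroup E] [InnerProductSpace ℝ E]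
    [FiniteDimensional ℝ E] (S : Set (Submodule ℝ E)) :
    Set (BoundedContinuousFunction E ℂ) :=
  { f | ∃ Y ∈ S, ∃ g : BoundedContinuousFunction (↥Yᗮ) ℂ,
      HasUniformRadialLimits ⇑g ∧ ∀ x : E, f x = g (Submodule.orthogonalProjection Yᗮ x) }

/-- `E_S(X)` : the smallest closed unital *-subalgebra of `C_b(X)` containing all `g ∘ π_Y`
with `Y ∈ S` and `g` having uniform radial limits at infinity. -/
def ES {E : Type*} [NormedAddCommGroup E] [InnerProductSpace ℝ E]
    [FiniteDimensional ℝ E] (S : Set (Submodule ℝ E)) :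
    StarSubalgebra ℂ (BoundedContinuousFunction E ℂ) :=
  (StarAlgebra.adjoin ℂ (projGen S)).topologicalClosure

/-- Estimate on the difference of unit vectors. -/
lemma norm_unit_sub_unit_le {E : Type*} [NormedAddCommGroup E] [NormedSpace ℝ E]
    (x y : E) (hx : x ≠ 0) (hy : y ≠ 0) :
    ‖‖x‖⁻¹ • x - ‖y‖⁻¹ • y‖ ≤ 2 * ‖x - y‖ / ‖x‖ := by
  have hx0 : (0:ℝ) < ‖x‖ := norm_pos_iff.mpr hx
  have hy0 : (0:ℝ) < ‖y‖ := norm_pos_iff.mpr hy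
  have key : ‖x‖⁻¹ • x - ‖y‖⁻¹ • y = ‖x‖⁻¹ • (x - y) + (‖x‖⁻¹ - ‖y‖⁻¹) • y := by
    rw [smul_sub, sub_smul]; abel
  rw [key]
  calc ‖‖x‖⁻¹ • (x - y) + (‖x‖⁻¹ - ‖y‖⁻¹) • y‖
      ≤ ‖‖x‖⁻¹ • (x - y)‖ + ‖(‖x‖⁻¹ - ‖y‖⁻¹) • y‖ := norm_add_le _ _
    _ = ‖x‖⁻¹ * ‖x - y‖ + |‖x‖⁻¹ - ‖y‖⁻¹| * ‖y‖ := by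
        rw [norm_smul, norm_smul, Real.norm_eq_abs, Real.norm_eq_abs,
          abs_of_pos (inv_pos.mpr hx0)]
    _ ≤ ‖x‖⁻¹ * ‖x - y‖ + (‖x - y‖ / (‖x‖ * ‖y‖)) * ‖y‖ := by
        gcongr
        rw [abs_sub_comm, ← one_div, ← one_div, div_sub_div _ _ hy0.ne' hx0.ne',
          one_mul, mul_one, abs_div, abs_of_pos (by positivity : (0:ℝ) < ‖y‖ * ‖x‖),
          div_le_div_iff₀ (by positivity) (by positivity)]
        calc |‖x‖ - ‖y‖| * (‖x‖ * ‖y‖) ≤ ‖x - y‖ * (‖x‖ * ‖y‖) := by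
              gcongr; exact abs_norm_sub_norm_le x y
          _ = ‖x - y‖ * (‖y‖ * ‖x‖) := by ring
    _ = 2 * ‖x - y‖ / ‖x‖ := by field_simp; ring

/-- Translation preserves having a given boundary function. -/
lemma IsBoundary.translate {E : Type*} [NormedAddCommGroup E] [InnerProductSpace ℝ E]
    [FiniteDimensional ℝ E] {g h : E → ℂ} (hb : IsBoundary g h) (b : E) :
    IsBoundary (fun z => g (z + b)) h := by
  refine ⟨hb.1, fun ε hε => ?_⟩
  -- uniform continuity of `h` on the unit sphere
  have hc : UniformContinuousOn h (sphere (0:E) 1) :=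
    (isCompact_sphere 0 1).uniformContinuousOn_of_continuous hb.1.continuousOn
  rw [Metric.uniformContinuousOn_iff] at hc
  obtain ⟨δ, hδ, hδ'⟩ := hc (ε/2) (by positivity)
  obtain ⟨r₀, hr₀, hr₀'⟩ := hb.2 (ε/2) (by positivity)
  refine ⟨r₀ + ‖b‖ + 2 * ‖b‖ / δ + 1, by positivity, fun z hz => ?_⟩
  have hbn : (0:ℝ) ≤ ‖b‖ := norm_nonneg b
  have hq : (0:ℝ) ≤ 2 * ‖b‖ / δ := by positivity
  have hzb : r₀ + 2 * ‖b‖ / δ + 1 ≤ ‖z + b‖ := by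
    have := norm_sub_le (z + b) b
    rw [add_sub_cancel_right] at this
    linarith
  have hzb0 : z + b ≠ 0 := by
    intro h0
    rw [h0, norm_zero] at hzb
    have : (0:ℝ) ≤ 2 * ‖b‖ / δ := by positivity
    linarith
  have hz0 : z ≠ 0 := by
    intro h0
    rw [h0, norm_zero] at hz
    have : (0:ℝ) ≤ 2 * ‖b‖ / δ := by positivity
    linarith
  have hzb0' : (0:ℝ) < ‖z + b‖ := norm_pos_iff.mpr hzb0
  -- the two unit vectors are close
  have hclose : dist (‖z + b‖⁻¹ • (z + b)) (‖z‖⁻¹ • z) < δ := by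
    rw [dist_eq_norm]
    calc ‖‖z + b‖⁻¹ • (z + b) - ‖z‖⁻¹ • z‖ ≤ 2 * ‖(z + b) - z‖ / ‖z + b‖ :=
          norm_unit_sub_unit_le _ _ hzb0 hz0
      _ = 2 * ‖b‖ / ‖z + b‖ := by rw [add_sub_cancel_left]
      _ < δ := by
          rw [div_lt_iff₀ hzb0']
          have h1 : 2 * ‖b‖ / δ + 1 ≤ ‖z + b‖ := by linarith
          have h2 : δ * (2 * ‖b‖ / δ + 1) ≤ δ * ‖z + b‖ := by
            exact mul_le_mul_of_nonneg_left h1 hδ.le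
          have h3 : δ * (2 * ‖b‖ / δ + 1) = 2 * ‖b‖ + δ := by field_simp
          linarith
  have hmem1 : ‖z + b‖⁻¹ • (z + b) ∈ sphere (0:E) 1 := by
    rw [mem_sphere_zero_iff_norm]
    exact norm_smul_inv_norm hzb0
  have hmem2 : ‖z‖⁻¹ • z ∈ sphere (0:E) 1 := by
    rw [mem_sphere_zero_iff_norm]
    exact norm_smul_inv_norm hz0
  have hhs : dist (h (‖z + b‖⁻¹ • (z + b))) (h (‖z‖⁻¹ • z)) < ε/2 :=
    hδ' _ hmem1 _ hmem2 hclose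
  have hg : ‖g (z + b) - h (‖z + b‖⁻¹ • (z + b))‖ < ε/2 :=
    hr₀' (z + b) (by linarith)
  calc ‖g (z + b) - h (‖z‖⁻¹ • z)‖
      ≤ ‖g (z + b) - h (‖z + b‖⁻¹ • (z + b))‖
        + ‖h (‖z + b‖⁻¹ • (z + b)) - h (‖z‖⁻¹ • z)‖ := norm_sub_le_norm_sub_add_norm_sub _ _ _
    _ < ε/2 + ε/2 := by
        rw [dist_eq_norm] at hhs
        exact add_lt_add hg hhs
    _ = ε := add_halves ε

/-- For any family `S` of linear subspaces of `X`, the algebra `E_S(X)` is invariant under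
translations: if `f ∈ E_S(X)` and `a ∈ X`, then `x ↦ f(x + a)` also belongs to `E_S(X)`. -/
theorem ES_translation_invariant (d : ℕ) (hd : 1 ≤ d) (S : Set (Submodule ℝ (X d)))
    (f : BoundedContinuousFunction (X d) ℂ) (hf : f ∈ ES S) (a : X d) :
    ∃ f' ∈ ES S, ∀ x : X d, f' x = f (x + a) := by
  classical
  set τ : C(X d, X d) := ⟨fun x => x + a, by continuity⟩ with hτ
  set T : BoundedContinuousFunction (X d) ℂ → BoundedContinuousFunction (X d) ℂ :=
    fun u => u.compContinuous τ with hT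
  have hTcont : Continuous T := BoundedContinuousFunction.continuous_compContinuous τ
  -- T maps the adjoin into ES S
  have hadj : ∀ u ∈ StarAlgebra.adjoin ℂ (projGen S), T u ∈ ES S := by
    intro u hu
    induction hu using StarAlgebra.adjoin_induction with
    | mem v hv =>
        obtain ⟨Y, hY, g, hg, hgv⟩ := hv
        apply StarSubalgebra.le_topologicalClosure
        apply StarAlgebra.subset_adjoin
        set b : ↥Yᗮ := Submodule.orthogonalProjection Yᗮ a with hb
        set σ : C(↥Yᗮ, ↥Yᗮ) := ⟨fun z => z + b, by continuity⟩ with hσ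
        refine ⟨Y, hY, g.compContinuous σ, ?_, ?_⟩
        · obtain ⟨h, hh⟩ := hg
          exact ⟨h, hh.translate b⟩
        · intro x
          have : (Submodule.orthogonalProjection Yᗮ) (x + a)
              = Submodule.orthogonalProjection Yᗮ x + b := by
            rw [map_add]
          simp only [T, BoundedContinuousFunction.compContinuous_apply, τ, σ,
            ContinuousMap.coe_mk, hgv (x + a), this]
    | algebraMap r =>
        have : T (algebraMap ℂ _ r) = algebraMap ℂ _ r := by
          ext x; rfl
        rw [this]; exact algebraMap_mem _ r
    | add v w hv hw ihv ihw =>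
        have : T (v + w) = T v + T w := by ext x; rfl
        rw [this]; exact add_mem ihv ihw
    | mul v w hv hw ihv ihw =>
        have : T (v * w) = T v * T w := by ext x; rfl
        rw [this]; exact mul_mem ihv ihw
    | star v hv ihv =>
        have : T (star v) = star (T v) := by ext x; rfl
        rw [this]; exact star_mem ihv
  -- closure argument
  refine ⟨T f, ?_, fun x => rfl⟩
  have hf' : f ∈ closure (StarAlgebra.adjoin ℂ (projGen S) : Set (BoundedContinuousFunction (X d) ℂ)) := hf
  have : T f ∈ closure (T '' (StarAlgebra.adjoin ℂ (projGen S) : Set (BoundedContinuousFunction (X d) ℂ))) := by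
    exact image_closure_subset_closure_image (f := T)
      (s := (StarAlgebra.adjoin ℂ (projGen S) : Set (BoundedContinuousFunction (X d) ℂ)))
      hTcont ⟨f, hf', rfl⟩
  have hsub : T '' (StarAlgebra.adjoin ℂ (projGen S) : Set (BoundedContinuousFunction (X d) ℂ))
      ⊆ (ES S : Set (BoundedContinuousFunction (X d) ℂ)) := by
    rintro _ ⟨u, hu, rfl⟩; exact hadj u hu
  have hclosed : IsClosed (ES S : Set (BoundedContinuousFunction (X d) ℂ)) :=
    (StarAlgebra.adjoin ℂ (projGen S)).isClosed_topologicalClosure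
  exact (closure_minimal hsub hclosed) this
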